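/- Let R(z) ∈ (End C^N)^{⊗2}[[z,h]] satisfy the quantum Yang–Baxter equation and unitarity R₁₂(z)R₂₁(1/z) = 1. If L(z) is an FRT-operator over W satisfying ι_{x,y}(R₁₂(x/y))L₁(x)L₂(y) = L₂(y)L₁(x)R₁₂(x/y), then L_{[n+m]}(x,y) = R'^{12}_{nm}(x/y) L^{13}_{[n]}(x) L^{23}_{[m]}(y), where L_{[n]}(x) = R'_{[n]}(x) L₁(x₁)⋯L_n(x_n). -/

import Mathlib

/-!
STATEMENT 16: Let R(z) satisfy the quantum Yang–Baxter equation and unitarity.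
If L(z) is an FRT-operator over W, i.e. ι_{x,y}(R₁₂(x/y))L₁(x)L₂(y) =
L₂(y)L₁(x)R₁₂(x/y), then
  L_{[n+m]}(x,y) = R'^{12}_{nm}(x/y) · L^{13}_{[n]}(x) · L^{23}_{[m]}(y),
where L_{[n]}(x) = R'_{[n]}(x) L₁(x₁)⋯L_n(x_n),
R'_{[n]}(x) = ∏→_{i<j} ι_{x_i,x_j} R_{ij}(x_i/x_j) and
R'^{12}_{nm}(x/y) = ∏←_{i=1..n} ∏→_{j=n+1..n+m} ι_{x_i,y_{j-n}} R_{ij}(x_i/y_{j-n}).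

Encoding: as in Statement 15, scalar series form a commutative ring S acting
centrally on the algebra 𝓐 of operator series.  The (n+m)-fold tensor product
of End ℂ^N is modeled by matrices indexed by `Fin (n+m) → Fin N`.  For each
pair of points p, p' of the combined family (x₁,…,x_n,y₁,…,y_m), `A p p'`
models the expansion ι R(p/p') with the first variable outer, and `B p p'` the
opposite expansion appearing on the right-hand side of the FRT-relation; `ℓ p`
models L evaluated at the p-th point.  The hypotheses are the FRT-relation at
each pair of points and the Yang–Baxter equation for both families of
expansions (all of which hold for an FRT-operator with R satisfying YBE and
unitarity); the superscripts 13, 23 correspond to the first n and last m sites.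
-/

open Matrix
open scoped Classical

noncomputable section

variable (N : ℕ) (S : Type*) [CommRing S] (𝓐 : Type*) [Ring 𝓐] [Algebra S 𝓐]

/-- Configuration space of `k` tensor factors of `ℂ^N`. -/
abbrev Site (N k : ℕ) := Fin k → Fin N

/-- An operator placed at site `i` of `k`. -/
def embS {k : ℕ} (i : Fin k) (M : Matrix (Fin N) (Fin N) 𝓐) :
    Matrix (Site N k) (Site N k) 𝓐 :=
  fun p q => if ∀ l, l ≠ i → p l = q l then M (p i) (q i) else 0

/-- A scalar (R-matrix) factor placed at the pair of sites `(i, j)` of `k`. -/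
def embP {k : ℕ} (i j : Fin k) (M : Matrix (Fin N × Fin N) (Fin N × Fin N) S) :
    Matrix (Site N k) (Site N k) 𝓐 :=
  fun p q => if ∀ l, l ≠ i → l ≠ j → p l = q l then
    algebraMap S 𝓐 (M (p i, p j) (q i, q j)) else 0

variable {k : ℕ}
variable (A B : Fin k → Fin k → Matrix (Fin N × Fin N) (Fin N × Fin N) S)
variable (ℓ : Fin k → Matrix (Fin N) (Fin N) 𝓐)

/-- `∏→_{i ∈ s} ∏→_{j > i, j ∈ t} ι R_{ij}` for lists of sites `s`, `t`. -/
def RprodOn (s t : List (Fin k)) : Matrix (Site N k) (Site N k) 𝓐 :=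
  (s.map fun i => ((t.filter fun j => decide (i < j)).map fun j => embP N S 𝓐 i j (A i j)).prod).prod

/-- The ordered product of operators `L` over a list of sites. -/
def LprodOn (s : List (Fin k)) : Matrix (Site N k) (Site N k) 𝓐 :=
  (s.map fun i => embS N 𝓐 i (ℓ i)).prod

/-- `L_{[s]} = R'_{[s]} ∏ L_i` over a list of sites. -/
def Lbrack (s : List (Fin k)) : Matrix (Site N k) (Site N k) 𝓐 :=
  RprodOn N S 𝓐 A s s * LprodOn N 𝓐 ℓ s

/-- `R'^{12}_{nm} = ∏←_{i ∈ first block} ∏→_{j ∈ second block} ι R_{ij}`. -/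
def R12prod (n : ℕ) : Matrix (Site N k) (Site N k) 𝓐 :=
  ((((List.finRange k).filter fun i => decide (i.val < n)).reverse).map fun i =>
    (((List.finRange k).filter fun j => decide (n ≤ j.val)).map fun j =>
      embP N S 𝓐 i j (A i j)).prod).prod


/-- simultaneous update at two sites -/
def upd2 {k : ℕ} (p : Site N k) (i j : Fin k) (a b : Fin N) : Site N k :=
  Function.update (Function.update p i a) j b

lemma upd2_self {k : ℕ} (q : Site N k) (i j : Fin k) :
    upd2 N q i j (q i) (q j) = q := by
  funext s
  by_cases h1 : s = j
  · subst h1; simp [upd2]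
  by_cases h2 : s = i
  · subst h2; simp [upd2, Function.update_apply, h1]
  · simp [upd2, Function.update_apply, h1, h2]

lemma upd2_apply_i {k : ℕ} (p : Site N k) {i j : Fin k} (hij : i ≠ j) (a b : Fin N) :
    upd2 N p i j a b i = a := by
  simp [upd2, Function.update_apply, hij]

lemma upd2_apply_j {k : ℕ} (p : Site N k) (i j : Fin k) (a b : Fin N) :
    upd2 N p i j a b j = b := by
  simp [upd2]

lemma upd2_apply_other {k : ℕ} (p : Site N k) {i j l : Fin k} (h1 : l ≠ i) (h2 : l ≠ j)
    (a b : Fin N) : upd2 N p i j a b l = p l := by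
  simp [upd2, Function.update_apply, h1, h2]

lemma genCommute {k : ℕ} {i j : Fin k} (hij : i ≠ j)
    (M : Matrix (Fin N × Fin N) (Fin N × Fin N) S)
    (Y : Matrix (Site N k) (Site N k) 𝓐)
    (H0 : ∀ p q : Site N k, (p i ≠ q i ∨ p j ≠ q j) → Y p q = 0)
    (H1 : ∀ p q : Site N k,
      Y (upd2 N p i j (q i) (q j)) q = Y p (upd2 N q i j (p i) (p j))) :
    Commute (embP N S 𝓐 i j M) Y := by
  have key1 : ∀ p q : Site N k,
      (embP N S 𝓐 i j M * Y) p q =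
        algebraMap S 𝓐 (M (p i, p j) (q i, q j)) * Y (upd2 N p i j (q i) (q j)) q := by
    intro p q
    rw [Matrix.mul_apply]
    rw [Finset.sum_eq_single (upd2 N p i j (q i) (q j))]
    · have h1 : embP N S 𝓐 i j M p (upd2 N p i j (q i) (q j)) =
          algebraMap S 𝓐 (M (p i, p j) (q i, q j)) := by
        rw [embP, if_pos, upd2_apply_i N p hij, upd2_apply_j]
        intro l hl1 hl2
        rw [upd2_apply_other N p hl1 hl2]
      rw [h1]
    · intro r _ hr
      by_cases hc : ∀ l, l ≠ i → l ≠ j → p l = r l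
      · by_cases hc2 : r i = q i ∧ r j = q j
        · exfalso; apply hr; funext s
          by_cases hsi : s = i
          · subst hsi; rw [upd2_apply_i N p hij]; exact hc2.1
          by_cases hsj : s = j
          · subst hsj; rw [upd2_apply_j]; exact hc2.2
          · rw [upd2_apply_other N p hsi hsj]; exact (hc s hsi hsj).symm
        · have : Y r q = 0 := by
            apply H0; rcases not_and_or.mp hc2 with h | h
            · exact Or.inl h
            · exact Or.inr h
          rw [this, mul_zero]
      · rw [embP, if_neg hc, zero_mul]
    · intro h; exact absurd (Finset.mem_univ _) h
  have key2 : ∀ p q : Site N k,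
      (Y * embP N S 𝓐 i j M) p q =
        Y p (upd2 N q i j (p i) (p j)) * algebraMap S 𝓐 (M (p i, p j) (q i, q j)) := by
    intro p q
    rw [Matrix.mul_apply]
    rw [Finset.sum_eq_single (upd2 N q i j (p i) (p j))]
    · have h1 : embP N S 𝓐 i j M (upd2 N q i j (p i) (p j)) q =
          algebraMap S 𝓐 (M (p i, p j) (q i, q j)) := by
        rw [embP, if_pos, upd2_apply_i N q hij, upd2_apply_j]
        intro l hl1 hl2
        rw [upd2_apply_other N q hl1 hl2]
      rw [h1]
    · intro r _ hr
      by_cases hc : ∀ l, l ≠ i → l ≠ j → r l = q l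
      · by_cases hc2 : p i = r i ∧ p j = r j
        · exfalso; apply hr; funext s
          by_cases hsi : s = i
          · subst hsi; rw [upd2_apply_i N q hij]; exact hc2.1.symm
          by_cases hsj : s = j
          · subst hsj; rw [upd2_apply_j]; exact hc2.2.symm
          · rw [upd2_apply_other N q hsi hsj]; exact hc s hsi hsj
        · have : Y p r = 0 := by
            apply H0; rcases not_and_or.mp hc2 with h | h
            · exact Or.inl h
            · exact Or.inr h
          rw [this, zero_mul]
      · rw [embP, if_neg hc, mul_zero]
    · intro h; exact absurd (Finset.mem_univ _) h
  unfold Commute SemiconjBy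
  ext p q
  rw [key1 p q, key2 p q, H1 p q, Algebra.commutes]

lemma commute_embP_embS {k : ℕ} {i j l : Fin k} (hij : i ≠ j) (hli : l ≠ i) (hlj : l ≠ j)
    (M : Matrix (Fin N × Fin N) (Fin N × Fin N) S) (L : Matrix (Fin N) (Fin N) 𝓐) :
    Commute (embP N S 𝓐 i j M) (embS N 𝓐 l L) := by
  apply genCommute N S 𝓐 hij
  · intro p q h
    rw [embS, if_neg]
    intro hall
    rcases h with h | h
    · exact h (hall i (Ne.symm hli))
    · exact h (hall j (Ne.symm hlj))
  · intro p q
    show (if ∀ s, s ≠ l → upd2 N p i j (q i) (q j) s = q s then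
        L (upd2 N p i j (q i) (q j) l) (q l) else 0) =
      (if ∀ s, s ≠ l → p s = upd2 N q i j (p i) (p j) s then
        L (p l) (upd2 N q i j (p i) (p j) l) else 0)
    rw [upd2_apply_other N p hli hlj, upd2_apply_other N q hli hlj]
    apply if_congr _ rfl rfl
    constructor
    · intro H s hs
      by_cases hsi : s = i
      · subst hsi; rw [upd2_apply_i N q hij]
      by_cases hsj : s = j
      · subst hsj; rw [upd2_apply_j]
      · rw [upd2_apply_other N q hsi hsj]
        have := H s hs; rwa [upd2_apply_other N p hsi hsj] at this
    · intro H s hs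
      by_cases hsi : s = i
      · subst hsi; rw [upd2_apply_i N p hij]
      by_cases hsj : s = j
      · subst hsj; rw [upd2_apply_j]
      · rw [upd2_apply_other N p hsi hsj]
        have := H s hs; rwa [upd2_apply_other N q hsi hsj] at this

lemma commute_embP_embP {k : ℕ} {i j i' j' : Fin k} (hij : i ≠ j)
    (h1 : i' ≠ i) (h2 : i' ≠ j) (h3 : j' ≠ i) (h4 : j' ≠ j)
    (M M' : Matrix (Fin N × Fin N) (Fin N × Fin N) S) :
    Commute (embP N S 𝓐 i j M) (embP N S 𝓐 i' j' M') := by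
  apply genCommute N S 𝓐 hij
  · intro p q h
    rw [embP, if_neg]
    intro hall
    rcases h with h | h
    · exact h (hall i (Ne.symm h1) (Ne.symm h3))
    · exact h (hall j (Ne.symm h2) (Ne.symm h4))
  · intro p q
    show (if ∀ s, s ≠ i' → s ≠ j' → upd2 N p i j (q i) (q j) s = q s then
        algebraMap S 𝓐 (M' (upd2 N p i j (q i) (q j) i', upd2 N p i j (q i) (q j) j')
          (q i', q j')) else 0) =
      (if ∀ s, s ≠ i' → s ≠ j' → p s = upd2 N q i j (p i) (p j) s then
        algebraMap S 𝓐 (M' (p i', p j')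
          (upd2 N q i j (p i) (p j) i', upd2 N q i j (p i) (p j) j')) else 0)
    rw [upd2_apply_other N p h1 h2, upd2_apply_other N p h3 h4,
      upd2_apply_other N q h1 h2, upd2_apply_other N q h3 h4]
    apply if_congr _ rfl rfl
    constructor
    · intro H s hs hs'
      by_cases hsi : s = i
      · subst hsi; rw [upd2_apply_i N q hij]
      by_cases hsj : s = j
      · subst hsj; rw [upd2_apply_j]
      · rw [upd2_apply_other N q hsi hsj]
        have := H s hs hs'; rwa [upd2_apply_other N p hsi hsj] at this
    · intro H s hs hs'
      by_cases hsi : s = i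
      · subst hsi; rw [upd2_apply_i N p hij]
      by_cases hsj : s = j
      · subst hsj; rw [upd2_apply_j]
      · rw [upd2_apply_other N p hsi hsj]
        have := H s hs hs'; rwa [upd2_apply_other N q hsi hsj] at this

/-- Cross-product `∏_{j ∈ b} R_{ij}` -/
def Tp (i : Fin k) (b : List (Fin k)) : Matrix (Site N k) (Site N k) 𝓐 :=
  (b.map fun j => embP N S 𝓐 i j (A i j)).prod

/-- `∏←_{i ∈ a} Tp i b` -/
def RevT (a b : List (Fin k)) : Matrix (Site N k) (Site N k) 𝓐 :=
  ((a.reverse).map fun i => Tp N S 𝓐 A i b).prod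

lemma commute_embP_Tp {i j i' : Fin k} (hij : i ≠ j) (h1 : i' ≠ i) (h2 : i' ≠ j)
    (M : Matrix (Fin N × Fin N) (Fin N × Fin N) S) {b : List (Fin k)}
    (hb : ∀ l ∈ b, l ≠ i ∧ l ≠ j) :
    Commute (embP N S 𝓐 i j M) (Tp N S 𝓐 A i' b) := by
  apply Commute.list_prod_right
  intro x hx
  rcases List.mem_map.mp hx with ⟨l, hl, rfl⟩
  exact commute_embP_embP N S 𝓐 hij h1 h2 (hb l hl).1 (hb l hl).2 _ _

lemma commute_embP_RevT {i j : Fin k} (hij : i ≠ j) {q b : List (Fin k)}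
    (hq : ∀ j' ∈ q, j' ≠ i ∧ j' ≠ j) (hb : ∀ l ∈ b, l ≠ i ∧ l ≠ j)
    (M : Matrix (Fin N × Fin N) (Fin N × Fin N) S) :
    Commute (embP N S 𝓐 i j M) (RevT N S 𝓐 A q b) := by
  apply Commute.list_prod_right
  intro x hx
  rcases List.mem_map.mp hx with ⟨j', hj', rfl⟩
  exact commute_embP_Tp N S 𝓐 A hij (hq j' (List.mem_reverse.mp hj')).1
    (hq j' (List.mem_reverse.mp hj')).2 _ hb

lemma commute_Tp_Tp {i j : Fin k} {q b : List (Fin k)} (hij : j ≠ i)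
    (h1 : ∀ j' ∈ q, i ≠ j') (h2 : ∀ j' ∈ q, j ≠ j')
    (hb : ∀ j' ∈ q, ∀ l ∈ b, l ≠ i ∧ l ≠ j') :
    Commute (Tp N S 𝓐 A i q) (Tp N S 𝓐 A j b) := by
  apply Commute.list_prod_left
  intro x hx
  rcases List.mem_map.mp hx with ⟨j', hj', rfl⟩
  exact commute_embP_Tp N S 𝓐 A (h1 j' hj') hij (h2 j' hj') _ (hb j' hj')

lemma ybe_chain
    (hy : ∀ i j l : Fin k, i < j → j < l →
      embP N S 𝓐 i j (A i j) * embP N S 𝓐 i l (A i l) * embP N S 𝓐 j l (A j l) =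
        embP N S 𝓐 j l (A j l) * embP N S 𝓐 i l (A i l) * embP N S 𝓐 i j (A i j))
    {i j : Fin k} (hij : i < j) :
    ∀ b : List (Fin k), (∀ l ∈ b, j < l) → b.Pairwise (· < ·) →
    embP N S 𝓐 i j (A i j) * Tp N S 𝓐 A i b * Tp N S 𝓐 A j b =
      Tp N S 𝓐 A j b * Tp N S 𝓐 A i b * embP N S 𝓐 i j (A i j) := by
  intro b
  induction b with
  | nil => intro _ _; simp [Tp]
  | cons l b' ih =>
    intro hb hpw
    have hjl : j < l := hb l List.mem_cons_self
    have hil : i < l := hij.trans hjl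
    have hb' : ∀ x ∈ b', j < x := fun x hx => hb x (List.mem_cons_of_mem l hx)
    have hpw' : b'.Pairwise (· < ·) := (List.pairwise_cons.mp hpw).2
    have hlb' : ∀ x ∈ b', l < x := (List.pairwise_cons.mp hpw).1
    have hTpi : Tp N S 𝓐 A i (l::b') = embP N S 𝓐 i l (A i l) * Tp N S 𝓐 A i b' := by
      simp [Tp]
    have hTpj : Tp N S 𝓐 A j (l::b') = embP N S 𝓐 j l (A j l) * Tp N S 𝓐 A j b' := by
      simp [Tp]
    have c1 : Commute (embP N S 𝓐 j l (A j l)) (Tp N S 𝓐 A i b') :=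
      commute_embP_Tp N S 𝓐 A hjl.ne hij.ne hil.ne _
        (fun x hx => ⟨(hb' x hx).ne', (hlb' x hx).ne'⟩)
    have c2 : Commute (embP N S 𝓐 i l (A i l)) (Tp N S 𝓐 A j b') :=
      commute_embP_Tp N S 𝓐 A hil.ne hij.ne' hjl.ne _
        (fun x hx => ⟨((hij.trans (hb' x hx))).ne', (hlb' x hx).ne'⟩)
    set P := embP N S 𝓐 i j (A i j)
    set X := embP N S 𝓐 i l (A i l)
    set Y := embP N S 𝓐 j l (A j l)
    set Ti := Tp N S 𝓐 A i b'
    set Tj := Tp N S 𝓐 A j b'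
    rw [hTpi, hTpj]
    have hyl : P * X * Y = Y * X * P := hy i j l hij hjl
    have hih : P * Ti * Tj = Tj * Ti * P := ih hb' hpw'
    calc P * (X * Ti) * (Y * Tj)
        = P * X * (Ti * Y) * Tj := by simp only [mul_assoc]
      _ = P * X * (Y * Ti) * Tj := by rw [← c1.eq]
      _ = (P * X * Y) * (Ti * Tj) := by simp only [mul_assoc]
      _ = (Y * X * P) * (Ti * Tj) := by rw [hyl]
      _ = Y * X * (P * Ti * Tj) := by simp only [mul_assoc]
      _ = Y * X * (Tj * Ti * P) := by rw [hih]
      _ = Y * (X * Tj) * (Ti * P) := by simp only [mul_assoc]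
      _ = Y * (Tj * X) * (Ti * P) := by rw [c2.eq]
      _ = Y * Tj * (X * Ti) * P := by simp only [mul_assoc]

lemma key_move
    (hy : ∀ i j l : Fin k, i < j → j < l →
      embP N S 𝓐 i j (A i j) * embP N S 𝓐 i l (A i l) * embP N S 𝓐 j l (A j l) =
        embP N S 𝓐 j l (A j l) * embP N S 𝓐 i l (A i l) * embP N S 𝓐 i j (A i j))
    {i : Fin k} (q b : List (Fin k)) :
    (∀ j ∈ q, i < j) → (∀ l ∈ b, i < l) → (∀ j ∈ q, ∀ l ∈ b, j < l) →
      q.Pairwise (· < ·) → b.Pairwise (· < ·) →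
    Tp N S 𝓐 A i q * Tp N S 𝓐 A i b * RevT N S 𝓐 A q b =
      RevT N S 𝓐 A q b * Tp N S 𝓐 A i b * Tp N S 𝓐 A i q := by
  induction q using List.reverseRecOn with
  | nil => intro _ _ _ _ _; simp [Tp, RevT]
  | append_singleton q' j ih =>
    intro hq hb hqb hpwq hpwb
    have hij : i < j := hq j (by simp)
    have hq' : ∀ x ∈ q', i < x := fun x hx => hq x (by simp [hx])
    have hq'j : ∀ x ∈ q', x < j := by
      intro x hx
      have := (List.pairwise_append.mp hpwq).2.2 x hx j (by simp)
      exact this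
    have hjb : ∀ l ∈ b, j < l := fun l hl => hqb j (by simp) l hl
    have hq'b : ∀ x ∈ q', ∀ l ∈ b, x < l := fun x hx l hl => hqb x (by simp [hx]) l hl
    have hpwq' : q'.Pairwise (· < ·) := (List.pairwise_append.mp hpwq).1
    have hTq : Tp N S 𝓐 A i (q' ++ [j]) = Tp N S 𝓐 A i q' * embP N S 𝓐 i j (A i j) := by
      simp [Tp]
    have hRv : RevT N S 𝓐 A (q' ++ [j]) b = Tp N S 𝓐 A j b * RevT N S 𝓐 A q' b := by
      simp [RevT, List.reverse_append]
    have c3 := ybe_chain N S 𝓐 A hy hij b hjb hpwb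
    have cA : Commute (Tp N S 𝓐 A i q') (Tp N S 𝓐 A j b) :=
      commute_Tp_Tp N S 𝓐 A hij.ne' (fun x hx => (hq' x hx).ne)
        (fun x hx => (hq'j x hx).ne') (fun x hx l hl =>
          ⟨(hb l hl).ne', (hq'b x hx l hl).ne'⟩)
    have cB : Commute (embP N S 𝓐 i j (A i j)) (RevT N S 𝓐 A q' b) :=
      commute_embP_RevT N S 𝓐 A hij.ne
        (fun x hx => ⟨(hq' x hx).ne', (hq'j x hx).ne⟩)
        (fun l hl => ⟨(hb l hl).ne', (hjb l hl).ne'⟩) _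
    have hih := ih hq' hb hq'b hpwq' hpwb
    set P := embP N S 𝓐 i j (A i j)
    set Tq := Tp N S 𝓐 A i q'
    set Tib := Tp N S 𝓐 A i b
    set Tjb := Tp N S 𝓐 A j b
    set Rv := RevT N S 𝓐 A q' b
    rw [hTq, hRv]
    calc Tq * P * Tib * (Tjb * Rv)
        = Tq * (P * Tib * Tjb) * Rv := by simp only [mul_assoc]
      _ = Tq * (Tjb * Tib * P) * Rv := by rw [c3]
      _ = (Tq * Tjb) * (Tib * (P * Rv)) := by simp only [mul_assoc]
      _ = (Tjb * Tq) * (Tib * (Rv * P)) := by rw [cA.eq, cB.eq]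
      _ = Tjb * (Tq * Tib * Rv) * P := by simp only [mul_assoc]
      _ = Tjb * (Rv * Tib * Tq) * P := by rw [hih]
      _ = Tjb * Rv * Tib * (Tq * P) := by simp only [mul_assoc]

lemma RprodOn_cons (i : Fin k) (s t : List (Fin k)) :
    RprodOn N S 𝓐 A (i::s) t =
      ((t.filter fun j => decide (i < j)).map fun j => embP N S 𝓐 i j (A i j)).prod *
        RprodOn N S 𝓐 A s t := by
  simp [RprodOn]

lemma RprodOn_t_drop (i : Fin k) (s t : List (Fin k)) (h : ∀ x ∈ s, ¬ x < i) :
    RprodOn N S 𝓐 A s (i::t) = RprodOn N S 𝓐 A s t := by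
  unfold RprodOn
  congr 1
  apply List.map_congr_left
  intro x hx
  rw [List.filter_cons_of_neg (by simpa using h x hx)]

lemma main_split
    (hy : ∀ i j l : Fin k, i < j → j < l →
      embP N S 𝓐 i j (A i j) * embP N S 𝓐 i l (A i l) * embP N S 𝓐 j l (A j l) =
        embP N S 𝓐 j l (A j l) * embP N S 𝓐 i l (A i l) * embP N S 𝓐 i j (A i j)) :
    ∀ a b : List (Fin k), (a ++ b).Pairwise (· < ·) →
    RprodOn N S 𝓐 A (a ++ b) (a ++ b) =
      RevT N S 𝓐 A a b * RprodOn N S 𝓐 A a a * RprodOn N S 𝓐 A b b := by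
  intro a
  induction a with
  | nil => intro b _; simp [RevT, RprodOn]
  | cons i a' ih =>
    intro b hpw
    rw [List.cons_append] at hpw
    have hpc := List.pairwise_cons.mp hpw
    have hlt : ∀ x ∈ a' ++ b, i < x := hpc.1
    have hpw' : (a' ++ b).Pairwise (· < ·) := hpc.2
    have hlta : ∀ x ∈ a', i < x := fun x hx => hlt x (List.mem_append_left _ hx)
    have hltb : ∀ x ∈ b, i < x := fun x hx => hlt x (List.mem_append_right _ hx)
    have hfilt : ((i :: (a' ++ b)).filter fun j => decide (i < j)) = a' ++ b := by
      rw [List.filter_cons_of_neg (by simp)]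
      exact List.filter_eq_self.mpr (fun x hx => by simpa using hlt x hx)
    have hfilt' : ((i :: a').filter fun j => decide (i < j)) = a' := by
      rw [List.filter_cons_of_neg (by simp)]
      exact List.filter_eq_self.mpr (fun x hx => by simpa using hlta x hx)
    have hstep : RprodOn N S 𝓐 A ((i :: a') ++ b) ((i :: a') ++ b) =
        (Tp N S 𝓐 A i a' * Tp N S 𝓐 A i b) * RprodOn N S 𝓐 A (a' ++ b) (a' ++ b) := by
      rw [List.cons_append, RprodOn_cons, hfilt,
        RprodOn_t_drop N S 𝓐 A i _ _ (fun x hx => asymm (hlt x hx))]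
      congr 1
      simp [Tp]
    have hsteps : RprodOn N S 𝓐 A (i :: a') (i :: a') =
        Tp N S 𝓐 A i a' * RprodOn N S 𝓐 A a' a' := by
      rw [RprodOn_cons, hfilt',
        RprodOn_t_drop N S 𝓐 A i _ _ (fun x hx => asymm (hlta x hx))]
      rfl
    have hrev : RevT N S 𝓐 A (i :: a') b = RevT N S 𝓐 A a' b * Tp N S 𝓐 A i b := by
      simp [RevT]
    have hqb : ∀ x ∈ a', ∀ l ∈ b, x < l := by
      intro x hx l hl
      exact (List.pairwise_append.mp hpw').2.2 x hx l hl
    have hpwa : a'.Pairwise (· < ·) := (List.pairwise_append.mp hpw').1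
    have hpwb : b.Pairwise (· < ·) := (List.pairwise_append.mp hpw').2.1
    have km := key_move N S 𝓐 A hy a' b hlta hltb hqb hpwa hpwb
    rw [hstep, ih b hpw', hsteps, hrev]
    calc (Tp N S 𝓐 A i a' * Tp N S 𝓐 A i b) *
          (RevT N S 𝓐 A a' b * RprodOn N S 𝓐 A a' a' * RprodOn N S 𝓐 A b b)
        = (Tp N S 𝓐 A i a' * Tp N S 𝓐 A i b * RevT N S 𝓐 A a' b) *
            (RprodOn N S 𝓐 A a' a' * RprodOn N S 𝓐 A b b) := by simp only [mul_assoc]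
      _ = (RevT N S 𝓐 A a' b * Tp N S 𝓐 A i b * Tp N S 𝓐 A i a') *
            (RprodOn N S 𝓐 A a' a' * RprodOn N S 𝓐 A b b) := by rw [km]
      _ = RevT N S 𝓐 A a' b * Tp N S 𝓐 A i b *
            (Tp N S 𝓐 A i a' * RprodOn N S 𝓐 A a' a') * RprodOn N S 𝓐 A b b := by
          simp only [mul_assoc]

lemma filter_split (n : ℕ) :
    ∀ l : List (Fin k), l.Pairwise (· < ·) →
      (l.filter fun i => decide (i.val < n)) ++ (l.filter fun i => decide (n ≤ i.val)) = l := by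
  intro l
  induction l with
  | nil => intro _; rfl
  | cons x l' ih =>
    intro hpw
    have h1 := (List.pairwise_cons.mp hpw).1
    have h2 := (List.pairwise_cons.mp hpw).2
    by_cases hx : x.val < n
    · rw [List.filter_cons_of_pos (by simpa using hx),
        List.filter_cons_of_neg (by simpa using not_le.mpr hx), List.cons_append, ih h2]
    · have hnx : n ≤ x.val := not_lt.mp hx
      have hvy : ∀ y ∈ l', n ≤ y.val := by
        intro y hy
        have : x.val < y.val := h1 y hy
        omega
      rw [List.filter_cons_of_neg (by simpa using hx),
        List.filter_cons_of_pos (by simpa using hnx)]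
      have e1 : l'.filter (fun i => decide (i.val < n)) = [] :=
        List.filter_eq_nil_iff.mpr (fun y hy => by
          have := hvy y hy; simp; omega)
      have e2 : l'.filter (fun i => decide (n ≤ i.val)) = l' :=
        List.filter_eq_self.mpr (fun y hy => by simpa using hvy y hy)
      rw [e1, e2]
      rfl

lemma commute_RprodOn_LprodOn {a b : List (Fin k)}
    (h : ∀ x ∈ a, ∀ y ∈ b, x ≠ y) :
    Commute (RprodOn N S 𝓐 A b b) (LprodOn N 𝓐 ℓ a) := by
  apply Commute.list_prod_left
  intro w hw
  rcases List.mem_map.mp hw with ⟨j, hj, rfl⟩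
  apply Commute.list_prod_left
  intro v hv
  rcases List.mem_map.mp hv with ⟨l', hl', rfl⟩
  have hl'b : l' ∈ b := (List.mem_filter.mp hl').1
  have hjl : j < l' := by simpa using (List.mem_filter.mp hl').2
  apply Commute.list_prod_right
  intro z hz
  rcases List.mem_map.mp hz with ⟨x, hx, rfl⟩
  exact commute_embP_embS N S 𝓐 hjl.ne
    (h x hx j hj) (h x hx l' hl'b) _ _
theorem stmt16 (n m : ℕ) (hk : k = n + m)
    -- the FRT-relation at each pair of points
    (hFRT : ∀ i j : Fin k, i < j →
      embP N S 𝓐 i j (A i j) * embS N 𝓐 i (ℓ i) * embS N 𝓐 j (ℓ j) =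
        embS N 𝓐 j (ℓ j) * embS N 𝓐 i (ℓ i) * embP N S 𝓐 i j (B i j))
    -- the Yang–Baxter equation for both families of expansions
    (hYBEA : ∀ i j l : Fin k, i < j → j < l →
      embP N S 𝓐 i j (A i j) * embP N S 𝓐 i l (A i l) * embP N S 𝓐 j l (A j l) =
        embP N S 𝓐 j l (A j l) * embP N S 𝓐 i l (A i l) * embP N S 𝓐 i j (A i j))
    (hYBEB : ∀ i j l : Fin k, i < j → j < l →
      embP N S 𝓐 i j (B i j) * embP N S 𝓐 i l (B i l) * embP N S 𝓐 j l (B j l) =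
        embP N S 𝓐 j l (B j l) * embP N S 𝓐 i l (B i l) * embP N S 𝓐 i j (B i j)) :
    Lbrack N S 𝓐 A ℓ (List.finRange k) =
      R12prod N S 𝓐 A n *
        Lbrack N S 𝓐 A ℓ ((List.finRange k).filter fun i => decide (i.val < n)) *
        Lbrack N S 𝓐 A ℓ ((List.finRange k).filter fun i => decide (n ≤ i.val)) := by
  set a := (List.finRange k).filter fun i => decide (i.val < n) with ha
  set b := (List.finRange k).filter fun i => decide (n ≤ i.val) with hb
  have hab : a ++ b = List.finRange k :=
    filter_split n (List.finRange k) (List.pairwise_lt_finRange k)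
  have hpw : (a ++ b).Pairwise (· < ·) := by
    rw [hab]; exact List.pairwise_lt_finRange k
  have hdis : ∀ x ∈ a, ∀ y ∈ b, x ≠ y := by
    intro x hx y hy he
    have h1 : x.val < n := by simpa using (List.mem_filter.mp hx).2
    have h2 : n ≤ y.val := by simpa using (List.mem_filter.mp hy).2
    subst he; omega
  have hcomm := commute_RprodOn_LprodOn N S 𝓐 A ℓ hdis
  have hL : LprodOn N 𝓐 ℓ (a ++ b) = LprodOn N 𝓐 ℓ a * LprodOn N 𝓐 ℓ b := by
    simp [LprodOn]
  have hR12 : R12prod N S 𝓐 A n = RevT N S 𝓐 A a b := rfl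
  rw [Lbrack, Lbrack, Lbrack, ← hab, hR12, main_split N S 𝓐 A hYBEA a b hpw, hL]
  set Rv := RevT N S 𝓐 A a b
  set Ra := RprodOn N S 𝓐 A a a
  set Rb := RprodOn N S 𝓐 A b b
  set La := LprodOn N 𝓐 ℓ a
  set Lb := LprodOn N 𝓐 ℓ b
  calc Rv * Ra * Rb * (La * Lb)
      = Rv * (Ra * ((Rb * La) * Lb)) := by simp only [mul_assoc]
    _ = Rv * (Ra * ((La * Rb) * Lb)) := by rw [hcomm.eq]
    _ = Rv * (Ra * La) * (Rb * Lb) := by simp only [mul_assoc]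

end
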